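/- Let F be a sparseness measure with cost function J on ℝⁿ, let k ≥ 1, and let d > 0. Define D := {z ∈ ℝⁿ : z ≠ 0 and there exists T ⊆ {1,…,n} with |T| ≤ k and J(z_T) ≥ J(z_{T^c})}, D_d := {z ∈ ℝⁿ : z ≠ 0 and there exists η ∈ ℝⁿ with ‖η‖ < d‖z‖ and z + η ∈ D}, the cones C := {x ∈ ℝⁿ : ∃ t ∈ ℝ, t x ∈ D} and C_d := {x ∈ ℝⁿ : ∃ t ∈ ℝ, t x ∈ D_d}, and the spherical sections K := C ∩ S^{n−1} and K_d := C_d ∩ S^{n−1}, where S^{n−1} is the Euclidean unit sphere of ℝⁿ. Then for every g ∈ ℝⁿ, sup_{x ∈ K_d} ⟨g, x⟩ ≤ d‖g‖ + sup_{x ∈ K} ⟨g, x⟩ (suprema taken as real suprema of the corresponding sets of inner products, with the convention sup ∅ = 0). -/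

import Mathlib

noncomputable section

/-- `F : ℝ → ℝ` is a sparseness measure: nonnegative on `[0,∞)`,
vanishing exactly at `0`, and `F (|·|)` is subadditive on `ℝ`. -/
def SparsenessMeasure (F : ℝ → ℝ) : Prop :=
  (∀ t : ℝ, 0 ≤ t → 0 ≤ F t) ∧
  (∀ t : ℝ, 0 ≤ t → (F t = 0 ↔ t = 0)) ∧
  (∀ x y : ℝ, F |x + y| ≤ F |x| + F |y|)

/-- The cost function `J(x) = ∑ i, F |x i|` on `ℝⁿ`. -/
def costJ {n : ℕ} (F : ℝ → ℝ) (x : EuclideanSpace ℝ (Fin n)) : ℝ :=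
  ∑ i, F |x i|

/-- The restricted cost `J(x_T) = ∑ i ∈ T, F |x i|`. -/
def costJT {n : ℕ} (F : ℝ → ℝ) (T : Finset (Fin n)) (x : EuclideanSpace ℝ (Fin n)) : ℝ :=
  ∑ i ∈ T, F |x i|

/-- `x` has at most `k` nonzero entries. -/
def Sparse {n : ℕ} (k : ℕ) (x : EuclideanSpace ℝ (Fin n)) : Prop :=
  ∃ T : Finset (Fin n), T.card ≤ k ∧ ∀ i ∉ T, x i = 0

/-- The matrix `A` acting as a continuous linear map between Euclidean spaces. -/
def mulVecCLM {m n : ℕ} (A : Matrix (Fin m) (Fin n) ℝ) :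
    EuclideanSpace ℝ (Fin n) →L[ℝ] EuclideanSpace ℝ (Fin m) :=
  (((EuclideanSpace.equiv (Fin m) ℝ).symm : (Fin m → ℝ) →L[ℝ] EuclideanSpace ℝ (Fin m)).comp
    (Matrix.mulVecLin A).toContinuousLinearMap).comp
    ((EuclideanSpace.equiv (Fin n) ℝ) : EuclideanSpace ℝ (Fin n) →L[ℝ] (Fin n → ℝ))

/-- `A` satisfies the robust recovery condition at sparsity `k` for the cost `J_F`
with constant `C`: for every `k`-sparse `x̄`, every `ε > 0`, every noise `v` with
`‖v‖ ≤ ε`, and every feasible `x̂` with `J(x̂) ≤ J(x̄)`, one has `‖x̄ - x̂‖ ≤ C ε`. -/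
def RRC {m n : ℕ} (A : Matrix (Fin m) (Fin n) ℝ) (k : ℕ) (F : ℝ → ℝ) (C : ℝ) : Prop :=
  ∀ xbar : EuclideanSpace ℝ (Fin n), Sparse k xbar →
    ∀ ε : ℝ, 0 < ε →
      ∀ v : EuclideanSpace ℝ (Fin m), ‖v‖ ≤ ε →
        ∀ xhat : EuclideanSpace ℝ (Fin n),
          ‖mulVecCLM A xhat - (mulVecCLM A xbar + v)‖ ≤ ε →
            costJ F xhat ≤ costJ F xbar → ‖xbar - xhat‖ ≤ C * ε

/-- The robust null space condition with parameter `d` for `(A, k, J_F)`. -/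
def RNSP {m n : ℕ} (A : Matrix (Fin m) (Fin n) ℝ) (k : ℕ) (F : ℝ → ℝ) (d : ℝ) : Prop :=
  ∀ z ∈ LinearMap.ker (mulVecCLM A : EuclideanSpace ℝ (Fin n) →ₗ[ℝ] EuclideanSpace ℝ (Fin m)), z ≠ 0 →
    ∀ η : EuclideanSpace ℝ (Fin n), ‖η‖ < d * ‖z‖ →
      ∀ T : Finset (Fin n), T.card ≤ k →
        costJT F T (z + η) < costJT F Tᶜ (z + η)

/-- The set `D` of nonzero vectors violating the null space inequality for some
support `T` with `|T| ≤ k`. -/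
def setD {n : ℕ} (F : ℝ → ℝ) (k : ℕ) : Set (EuclideanSpace ℝ (Fin n)) :=
  {z | z ≠ 0 ∧ ∃ T : Finset (Fin n), T.card ≤ k ∧ costJT F Tᶜ z ≤ costJT F T z}

/-- The set `D_d` of nonzero vectors within relative distance `d` of `D`. -/
def setDd {n : ℕ} (F : ℝ → ℝ) (k : ℕ) (d : ℝ) : Set (EuclideanSpace ℝ (Fin n)) :=
  {z | z ≠ 0 ∧ ∃ η : EuclideanSpace ℝ (Fin n), ‖η‖ < d * ‖z‖ ∧ z + η ∈ setD F k}

/-- The cone generated by `D`. -/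
def coneC {n : ℕ} (F : ℝ → ℝ) (k : ℕ) : Set (EuclideanSpace ℝ (Fin n)) :=
  {x | ∃ t : ℝ, t • x ∈ setD F k}

/-- The cone generated by `D_d`. -/
def coneCd {n : ℕ} (F : ℝ → ℝ) (k : ℕ) (d : ℝ) : Set (EuclideanSpace ℝ (Fin n)) :=
  {x | ∃ t : ℝ, t • x ∈ setDd F k d}

/-- The spherical section `K = C ∩ S^{n−1}`. -/
def sphK {n : ℕ} (F : ℝ → ℝ) (k : ℕ) : Set (EuclideanSpace ℝ (Fin n)) :=
  coneC F k ∩ Metric.sphere (0 : EuclideanSpace ℝ (Fin n)) 1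

/-- The spherical section `K_d = C_d ∩ S^{n−1}`. -/
def sphKd {n : ℕ} (F : ℝ → ℝ) (k : ℕ) (d : ℝ) : Set (EuclideanSpace ℝ (Fin n)) :=
  coneCd F k d ∩ Metric.sphere (0 : EuclideanSpace ℝ (Fin n)) 1


lemma neg_mem_setD' {n : ℕ} {F : ℝ → ℝ} {k : ℕ} {z : EuclideanSpace ℝ (Fin n)}
    (hz : z ∈ setD F k) : -z ∈ setD F k := by
  obtain ⟨hz0, T, hT, hle⟩ := hz
  refine ⟨neg_ne_zero.mpr hz0, T, hT, ?_⟩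
  have h : ∀ S : Finset (Fin n), costJT F S (-z) = costJT F S z := by
    intro S; unfold costJT
    refine Finset.sum_congr rfl fun i _ => ?_
    have : (-z) i = -(z i) := rfl
    rw [this, abs_neg]
  rw [h, h]; exact hle

lemma neg_mem_sphK' {n : ℕ} {F : ℝ → ℝ} {k : ℕ} {y : EuclideanSpace ℝ (Fin n)}
    (hy : y ∈ sphK F k) : -y ∈ sphK F k := by
  obtain ⟨⟨t, ht⟩, hs⟩ := hy
  refine ⟨⟨-t, ?_⟩, ?_⟩
  · have : (-t) • (-y) = t • y := by simp
    rw [this]; exact ht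
  · simpa using hs

lemma norm_sub_normalize_le' {n : ℕ} {x u : EuclideanSpace ℝ (Fin n)}
    (hx : ‖x‖ ≤ 1) (hu : 1 ≤ ‖u‖) : ‖x - ‖u‖⁻¹ • u‖ ≤ ‖x - u‖ := by
  have hu0 : (0:ℝ) < ‖u‖ := lt_of_lt_of_le one_pos hu
  rw [← Real.sqrt_sq (norm_nonneg (x - ‖u‖⁻¹ • u)), ← Real.sqrt_sq (norm_nonneg (x - u))]
  apply Real.sqrt_le_sqrt
  have h1 : ‖x - ‖u‖⁻¹ • u‖ ^ 2 = ‖x‖ ^ 2 - 2 * inner ℝ x (‖u‖⁻¹ • u) + ‖‖u‖⁻¹ • u‖ ^ 2 :=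
    norm_sub_sq_real x _
  have h2 : ‖x - u‖ ^ 2 = ‖x‖ ^ 2 - 2 * inner ℝ x u + ‖u‖ ^ 2 := norm_sub_sq_real x u
  have h3 : (inner ℝ x (‖u‖⁻¹ • u) : ℝ) = ‖u‖⁻¹ * inner ℝ x u := real_inner_smul_right x u _
  have h4 : ‖‖u‖⁻¹ • u‖ = 1 := by
    rw [norm_smul, Real.norm_eq_abs, abs_of_pos (inv_pos.mpr hu0), inv_mul_cancel₀ hu0.ne']
  have h5 : (inner ℝ x u : ℝ) ≤ ‖x‖ * ‖u‖ := real_inner_le_norm x u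
  have h6 : ‖u‖⁻¹ * ‖u‖ = 1 := inv_mul_cancel₀ hu0.ne'
  rw [h1, h2, h3, h4]
  have hxn : (0:ℝ) ≤ ‖x‖ := norm_nonneg x
  nlinarith [sq_nonneg (‖u‖ - 1), mul_pos hu0 hu0, sq_nonneg (‖u‖⁻¹ * (‖u‖ - 1))]


/-- inequality (47) in the escape-through-the-mesh analysis:
for every `g ∈ ℝⁿ`, `sup_{x ∈ K_d} ⟨g, x⟩ ≤ d ‖g‖ + sup_{x ∈ K} ⟨g, x⟩`, the suprema
being real suprema (`Real.sSup`, with `sSup ∅ = 0`). -/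
theorem stmt13 {n : ℕ} (F : ℝ → ℝ) (hF : SparsenessMeasure F) (k : ℕ) (hk : 1 ≤ k)
    (d : ℝ) (hd : 0 < d) (g : EuclideanSpace ℝ (Fin n)) :
    sSup ((fun x => (inner ℝ g x : ℝ)) '' sphKd F k d) ≤
      d * ‖g‖ + sSup ((fun x => (inner ℝ g x : ℝ)) '' sphK F k) := by
  classical
  set KS : Set ℝ := (fun x => (inner ℝ g x : ℝ)) '' sphK F k with hKS
  have hbdd : BddAbove KS := by
    refine ⟨‖g‖, ?_⟩
    rintro a ⟨y, ⟨_, hy1⟩, rfl⟩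
    have hy : ‖y‖ = 1 := mem_sphere_zero_iff_norm.mp hy1
    calc (inner ℝ g y : ℝ) ≤ ‖g‖ * ‖y‖ := real_inner_le_norm g y
      _ = ‖g‖ := by rw [hy, mul_one]
  set S : ℝ := sSup KS with hSdef
  have hmemS : ∀ y ∈ sphK F k, (inner ℝ g y : ℝ) ≤ S := fun y hy =>
    le_csSup hbdd ⟨y, hy, rfl⟩
  have hS0 : 0 ≤ S := by
    rcases Set.eq_empty_or_nonempty (sphK F k) with h | ⟨y, hy⟩
    · have hKe : KS = ∅ := by rw [hKS, h, Set.image_empty]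
      rw [hSdef, hKe, Real.sSup_empty]
    · have h1 := hmemS y hy
      have h2 := hmemS (-y) (neg_mem_sphK' hy)
      rw [inner_neg_right] at h2
      linarith
  apply Real.sSup_le
  · rintro a ⟨x, ⟨⟨t, ht⟩, hx1⟩, rfl⟩
    have hx : ‖x‖ = 1 := mem_sphere_zero_iff_norm.mp hx1
    obtain ⟨htx0, η, hη, hw⟩ := ht
    have ht0 : t ≠ 0 := by rintro rfl; exact htx0 (zero_smul ℝ x)
    obtain ⟨t', η', ht'0, hη', hw'⟩ :
        ∃ t' : ℝ, ∃ η' : EuclideanSpace ℝ (Fin n),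
          0 < t' ∧ ‖η'‖ < d * ‖t' • x‖ ∧ t' • x + η' ∈ setD F k := by
      rcases ht0.lt_or_gt with h | h
      · refine ⟨-t, -η, by linarith, ?_, ?_⟩
        · have hns : ‖(-t) • x‖ = ‖t • x‖ := by rw [neg_smul, norm_neg]
          rw [hns, norm_neg]; exact hη
        · have : (-t) • x + -η = -(t • x + η) := by
            rw [neg_smul, neg_add]
          rw [this]; exact neg_mem_setD' hw
      · exact ⟨t, η, h, hη, hw⟩
    have hz : ‖t' • x‖ = t' := by
      rw [norm_smul, Real.norm_eq_abs, abs_of_pos ht'0, hx, mul_one]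
    rw [hz] at hη'
    set w : EuclideanSpace ℝ (Fin n) := t' • x + η' with hwdef
    have hw0 : w ≠ 0 := hw'.1
    have hwn : (0:ℝ) < ‖w‖ := norm_pos_iff.mpr hw0
    set y : EuclideanSpace ℝ (Fin n) := ‖w‖⁻¹ • w with hydef
    have hyn : ‖y‖ = 1 := by
      rw [hydef, norm_smul, Real.norm_eq_abs, abs_of_pos (inv_pos.mpr hwn),
        inv_mul_cancel₀ hwn.ne']
    have hyK : y ∈ sphK F k := by
      refine ⟨⟨‖w‖, ?_⟩, mem_sphere_zero_iff_norm.mpr hyn⟩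
      rw [hydef, smul_inv_smul₀ hwn.ne']
      exact hw'
    have hqS : (inner ℝ g y : ℝ) ≤ S := hmemS y hyK
    have hgw : (inner ℝ g w : ℝ) = ‖w‖ * inner ℝ g y := by
      rw [hydef, real_inner_smul_right]
      field_simp
    have hcs : |(inner ℝ g η' : ℝ)| ≤ ‖g‖ * ‖η'‖ := abs_real_inner_le_norm g η'
    have hgz : (inner ℝ g (t' • x) : ℝ) = t' * inner ℝ g x := real_inner_smul_right g x t'
    have hsplit : t' * (inner ℝ g x : ℝ) = inner ℝ g w - inner ℝ g η' := by
      rw [← hgz, hwdef, inner_add_right]; ring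
    have hgn : (0:ℝ) ≤ ‖g‖ := norm_nonneg g
    have key : (inner ℝ g x : ℝ) ≤ d * ‖g‖ + S := by
      rcases le_or_gt ‖w‖ t' with hcase | hcase
      · -- ‖w‖ ≤ t'
        have h1 : ‖w‖ * (inner ℝ g y : ℝ) ≤ t' * S := by
          nlinarith [mul_nonneg (sub_nonneg.mpr hcase) hS0,
            mul_nonneg hwn.le (sub_nonneg.mpr hqS)]
        have h2 : -(inner ℝ g η' : ℝ) ≤ ‖g‖ * (d * t') := by
          have := neg_abs_le (inner ℝ g η' : ℝ)
          have h3 : ‖g‖ * ‖η'‖ ≤ ‖g‖ * (d * t') :=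
            mul_le_mul_of_nonneg_left hη'.le hgn
          linarith
        have : t' * (inner ℝ g x : ℝ) ≤ t' * (d * ‖g‖ + S) := by
          rw [hsplit, hgw]; nlinarith
        exact le_of_mul_le_mul_left (by linarith) ht'0
      · -- t' < ‖w‖
        set u : EuclideanSpace ℝ (Fin n) := t'⁻¹ • w with hudef
        have hun : ‖u‖ = t'⁻¹ * ‖w‖ := by
          rw [hudef, norm_smul, Real.norm_eq_abs, abs_of_pos (inv_pos.mpr ht'0)]
        have hu1 : 1 ≤ ‖u‖ := by
          rw [hun]
          have h6 : t'⁻¹ * t' = 1 := inv_mul_cancel₀ ht'0.ne'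
          have h7 := mul_le_mul_of_nonneg_left hcase.le (inv_pos.mpr ht'0).le
          linarith
        have huy : ‖u‖⁻¹ • u = y := by
          rw [hudef, hun, smul_smul, hydef]
          congr 1
          rw [mul_inv, inv_inv]
          field_simp
        have hxu : x - u = t'⁻¹ • (-η') := by
          rw [hudef, hwdef, smul_add, smul_smul, inv_mul_cancel₀ ht'0.ne', one_smul,
            smul_neg]
          abel
        have hxun : ‖x - u‖ < d := by
          rw [hxu, norm_smul, Real.norm_eq_abs, abs_of_pos (inv_pos.mpr ht'0), norm_neg]
          rw [inv_mul_lt_iff₀ ht'0]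
          calc ‖η'‖ < d * t' := hη'
            _ = t' * d := by ring
        have hxy : ‖x - y‖ < d := by
          calc ‖x - y‖ = ‖x - ‖u‖⁻¹ • u‖ := by rw [huy]
            _ ≤ ‖x - u‖ := norm_sub_normalize_le' hx.le hu1
            _ < d := hxun
        have hip : (inner ℝ g (x - y) : ℝ) ≤ ‖g‖ * ‖x - y‖ := real_inner_le_norm g _
        have : (inner ℝ g x : ℝ) = inner ℝ g y + inner ℝ g (x - y) := by
          rw [inner_sub_right]; ring
        rw [this]
        have : ‖g‖ * ‖x - y‖ ≤ ‖g‖ * d := mul_le_mul_of_nonneg_left hxy.le hgn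
        nlinarith
    exact key
  · positivity
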